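/- Let W be a real symmetric d×d matrix with largest eigenvalue λ₁ and smallest eigenvalue λ_d. Suppose u and v are unit vectors in ℝ^d satisfying ⟨Wu, u⟩ ≥ λ₁ − (1/4)(λ₁ − λ_d) and ⟨Wv, v⟩ ≤ λ_d + (1/4)(λ₁ − λ_d). Set λ̂₁ = ⟨Wu, u⟩, λ̂_d = ⟨Wv, v⟩, and λ̂ = max{λ̂₁, −λ̂_d}. Then λ₁ ≤ λ̂₁ + (1/2)(λ̂₁ − λ̂_d), λ_d ≥ λ̂_d − (1/2)(λ̂₁ − λ̂_d), and ‖W‖_op ≤ 2λ̂. -/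

import Mathlib

open scoped RealInnerProductSpace

noncomputable section

/-- The continuous linear map on Euclidean space induced by a square real matrix. -/
def matCLM {d : ℕ} (M : Matrix (Fin d) (Fin d) ℝ) :
    EuclideanSpace ℝ (Fin d) →L[ℝ] EuclideanSpace ℝ (Fin d) :=
  Matrix.toEuclideanCLM (𝕜 := ℝ) M

lemma matCLM_eigen {d : ℕ} (W : Matrix (Fin d) (Fin d) ℝ) (hW : W.IsHermitian) (j : Fin d) :
    matCLM W (hW.eigenvectorBasis j) = hW.eigenvalues j • hW.eigenvectorBasis j := by
  ext i
  have h := congrFun (hW.mulVec_eigenvectorBasis j) i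
  have h2 := congrFun (Matrix.ofLp_toEuclideanCLM (𝕜 := ℝ) W (hW.eigenvectorBasis j)) i
  simpa [matCLM, h2] using h

lemma matCLM_symm {d : ℕ} (W : Matrix (Fin d) (Fin d) ℝ) (hW : W.IsHermitian)
    (x y : EuclideanSpace ℝ (Fin d)) : ⟪matCLM W x, y⟫ = ⟪x, matCLM W y⟫ := by
  have hs := Matrix.isHermitian_iff_isSymmetric.mp hW
  have hx : matCLM W x = Matrix.toEuclideanLin W x := by
    rw [matCLM, ← Matrix.coe_toEuclideanCLM_eq_toEuclideanLin]; rfl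
  have hy : matCLM W y = Matrix.toEuclideanLin W y := by
    rw [matCLM, ← Matrix.coe_toEuclideanCLM_eq_toEuclideanLin]; rfl
  rw [hx, hy]; exact hs x y

/-- Core estimate in the correctness proof of the approximate separation
oracle: approximate extreme Rayleigh quotients with relative accuracy `1/4` sandwich the
extreme eigenvalues of the symmetric matrix `W`, and bound its operator norm by `2λ̂`. -/
theorem stmt16 {d : ℕ}
    (W : Matrix (Fin d) (Fin d) ℝ) (hW : W.IsHermitian)
    (lam1 lamd : ℝ)
    (hlam1ub : ∀ i, hW.eigenvalues i ≤ lam1) (hlam1mem : ∃ i, hW.eigenvalues i = lam1)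
    (hlamdlb : ∀ i, lamd ≤ hW.eigenvalues i) (hlamdmem : ∃ i, hW.eigenvalues i = lamd)
    (u v : EuclideanSpace ℝ (Fin d)) (hu : ‖u‖ = 1) (hv : ‖v‖ = 1)
    (h1 : lam1 - (1 / 4) * (lam1 - lamd) ≤ ⟪matCLM W u, u⟫)
    (h2 : ⟪matCLM W v, v⟫ ≤ lamd + (1 / 4) * (lam1 - lamd))
    (l1 ld lhat : ℝ)
    (hl1 : l1 = ⟪matCLM W u, u⟫) (hld : ld = ⟪matCLM W v, v⟫)
    (hlhat : lhat = max l1 (-ld)) :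
    lam1 ≤ l1 + (1 / 2) * (l1 - ld)
      ∧ ld - (1 / 2) * (l1 - ld) ≤ lamd
      ∧ ‖matCLM W‖ ≤ 2 * lhat := by
  set B := hW.eigenvectorBasis with hB
  set T := matCLM W with hT
  -- repr of T x
  have hrepr : ∀ (x : EuclideanSpace ℝ (Fin d)) (j : Fin d),
      B.repr (T x) j = hW.eigenvalues j * B.repr x j := by
    intro x j
    rw [B.repr_apply_apply, B.repr_apply_apply, ← matCLM_symm W hW, matCLM_eigen W hW j,
      real_inner_smul_left]
  have hinner : ∀ x : EuclideanSpace ℝ (Fin d),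
      ⟪T x, x⟫ = ∑ j, hW.eigenvalues j * (B.repr x j) ^ 2 := by
    intro x
    rw [← B.repr.inner_map_map (T x) x]
    rw [PiLp.inner_apply]
    refine Finset.sum_congr rfl fun j _ => ?_
    rw [hrepr]
    simp [RCLike.inner_apply]
    ring
  have hxnormsq : ∀ x : EuclideanSpace ℝ (Fin d), ‖x‖ ^ 2 = ∑ j, (B.repr x j) ^ 2 := by
    intro x
    rw [← real_inner_self_eq_norm_sq, ← B.repr.inner_map_map x x, PiLp.inner_apply]
    refine Finset.sum_congr rfl fun j _ => ?_
    simp [RCLike.inner_apply]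
  have hTnormsq : ∀ x : EuclideanSpace ℝ (Fin d),
      ‖T x‖ ^ 2 = ∑ j, (hW.eigenvalues j * B.repr x j) ^ 2 := by
    intro x
    rw [hxnormsq (T x)]
    exact Finset.sum_congr rfl fun j _ => by rw [hrepr]
  -- Rayleigh bounds
  have rayleigh : ∀ x : EuclideanSpace ℝ (Fin d), ‖x‖ = 1 →
      lamd ≤ ⟪T x, x⟫ ∧ ⟪T x, x⟫ ≤ lam1 := by
    intro x hx
    have hs : ∑ j, (B.repr x j) ^ 2 = 1 := by rw [← hxnormsq, hx]; norm_num
    constructor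
    · calc lamd = ∑ j, lamd * (B.repr x j) ^ 2 := by rw [← Finset.mul_sum, hs, mul_one]
        _ ≤ ∑ j, hW.eigenvalues j * (B.repr x j) ^ 2 :=
            Finset.sum_le_sum fun j _ => mul_le_mul_of_nonneg_right (hlamdlb j) (sq_nonneg _)
        _ = ⟪T x, x⟫ := (hinner x).symm
    · calc ⟪T x, x⟫ = ∑ j, hW.eigenvalues j * (B.repr x j) ^ 2 := hinner x
        _ ≤ ∑ j, lam1 * (B.repr x j) ^ 2 :=
            Finset.sum_le_sum fun j _ => mul_le_mul_of_nonneg_right (hlam1ub j) (sq_nonneg _)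
        _ = lam1 := by rw [← Finset.mul_sum, hs, mul_one]
  obtain ⟨i0, hi0⟩ := hlam1mem
  have hld_le : lamd ≤ lam1 := hi0 ▸ hlamdlb i0
  have hru := rayleigh u hu
  have hrv := rayleigh v hv
  have hc1 : lam1 ≤ l1 + (1 / 2) * (l1 - ld) := by
    rw [hl1, hld]; linarith [hru.1, hru.2, hrv.1, hrv.2, h1, h2]
  have hc2 : ld - (1 / 2) * (l1 - ld) ≤ lamd := by
    rw [hl1, hld]; linarith [hru.1, hru.2, hrv.1, hrv.2, h1, h2]
  refine ⟨hc1, hc2, ?_⟩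
  -- operator norm bound
  have hl1le : l1 ≤ lhat := hlhat ▸ le_max_left _ _
  have hldle : -ld ≤ lhat := hlhat ▸ le_max_right _ _
  set M : ℝ := max lam1 (-lamd) with hM
  have hM1 : lam1 ≤ M := le_max_left _ _
  have hM2 : -lamd ≤ M := le_max_right _ _
  have hM0 : 0 ≤ M := by linarith
  have hTle : ‖T‖ ≤ M := by
    refine T.opNorm_le_bound hM0 fun x => ?_
    have hsq : ‖T x‖ ^ 2 ≤ (M * ‖x‖) ^ 2 := by
      rw [hTnormsq x, mul_pow, hxnormsq x, Finset.mul_sum]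
      refine Finset.sum_le_sum fun j _ => ?_
      rw [mul_pow]
      refine mul_le_mul_of_nonneg_right ?_ (sq_nonneg _)
      exact sq_le_sq' (by linarith [hlamdlb j]) (by linarith [hlam1ub j])
    nlinarith [norm_nonneg (T x), mul_nonneg hM0 (norm_nonneg x)]
  have hMle : M ≤ 2 * lhat := by
    refine max_le ?_ ?_ <;> linarith
  linarith
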